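/- For every finite connected poset P, the coproduct δ satisfies the left non-coassociative permutative (NAP) identity (id ⊗ δ)∘δ (P) = τ¹²∘(id ⊗ δ)∘δ (P), where τ¹² swaps the first two tensor factors. Explicitly, the element (1/|min(P)|) Σ_{I ◎ P} (1/|min(P\I)|) Σ_{J ◎ (P\I)} I ⊗ J ⊗ ((P\I)\J) of V ⊗ V ⊗ V is invariant under exchanging the first two tensor factors, where V is the ℚ-vector space with basis the finite connected posets on subsets of the ground set of P. -/

import Mathlib

open scoped Classical

/-- A finite poset on a subset (`carrier`) of an ambient type `α`. -/
structure FinPoset (α : Type*) where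
  carrier : Finset α
  le : α → α → Prop
  mem_of_le : ∀ ⦃x y⦄, le x y → x ∈ carrier ∧ y ∈ carrier
  le_refl : ∀ x ∈ carrier, le x x
  le_trans : ∀ ⦃x y z⦄, le x y → le y z → le x z
  le_antisymm : ∀ ⦃x y⦄, le x y → le y x → x = y

namespace FinPoset

variable {α : Type*} [DecidableEq α]

/-- The strict order `x <_P y`. -/
def lt (P : FinPoset α) (x y : α) : Prop := P.le x y ∧ x ≠ y

/-- `min(P)`: the set of minimal elements of `P`. -/
noncomputable def minSet (P : FinPoset α) : Finset α :=
  P.carrier.filter (fun x => ∀ y, P.le y x → y = x)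

/-- Connectivity of a subset `S`, for the graph with edges between comparable pairs. -/
def ConnOn (P : FinPoset α) (S : Set α) : Prop :=
  ∀ x ∈ S, ∀ y ∈ S,
    Relation.ReflTransGen (fun a b => a ∈ S ∧ b ∈ S ∧ (P.le a b ∨ P.le b a)) x y

/-- A finite poset is connected if it is nonempty and any two elements are linked by a
chain of comparable pairs. -/
def Connected (P : FinPoset α) : Prop :=
  P.carrier.Nonempty ∧ P.ConnOn ↑P.carrier

/-- `I` is a connected component of `S` (for the comparability graph of `P`). -/
def IsCC (P : FinPoset α) (S I : Set α) : Prop :=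
  I.Nonempty ∧ I ⊆ S ∧ P.ConnOn I ∧
    ∀ x ∈ I, ∀ y ∈ S, (P.le x y ∨ P.le y x) → y ∈ I

/-- `I_- = {x ∈ P \ I : ∃ y ∈ I, x ≤_P y}`. -/
noncomputable def below (P : FinPoset α) (I : Finset α) : Finset α :=
  (P.carrier \ I).filter (fun x => ∃ y ∈ I, P.le x y)

/-- `I ◎ P` : `I_-` is a singleton `{w}` with `w ∈ min(P)`, and `I` is a connected
component of `{x ∈ P : w <_P x}`. -/
def Circ (P : FinPoset α) (I : Finset α) : Prop :=
  ∃ w, P.below I = {w} ∧ w ∈ P.minSet ∧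
    P.IsCC {x | x ∈ P.carrier ∧ P.lt w x} ↑I

/-- The induced poset on a subset `S`. -/
def restrict (P : FinPoset α) (S : Finset α) : FinPoset α where
  carrier := P.carrier ∩ S
  le x y := P.le x y ∧ x ∈ S ∧ y ∈ S
  mem_of_le := by
    intro x y h
    rcases P.mem_of_le h.1 with ⟨hx, hy⟩
    exact ⟨Finset.mem_inter.2 ⟨hx, h.2.1⟩, Finset.mem_inter.2 ⟨hy, h.2.2⟩⟩
  le_refl := by
    intro x hx
    rcases Finset.mem_inter.1 hx with ⟨h1, h2⟩
    exact ⟨P.le_refl x h1, h2, h2⟩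
  le_trans := by
    rintro x y z ⟨h1, hx, hy⟩ ⟨h2, _, hz⟩
    exact ⟨P.le_trans h1 h2, hx, hz⟩
  le_antisymm := by
    rintro x y ⟨h1, _, _⟩ ⟨h2, _, _⟩
    exact P.le_antisymm h1 h2

/-- The grafting `P ↘_v Q` of `P` above the vertex `v` of `Q` (auxiliary version, with
the disjointness hypotheses as arguments). -/
def graftAux (P Q : FinPoset α) (v : α) (hd : Disjoint P.carrier Q.carrier)
    (hv : v ∈ Q.carrier) : FinPoset α where
  carrier := P.carrier ∪ Q.carrier
  le x y := P.le x y ∨ Q.le x y ∨ (Q.le x v ∧ y ∈ P.carrier)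
  mem_of_le := by
    rintro x y (h | h | ⟨h1, h2⟩)
    · rcases P.mem_of_le h with ⟨hx, hy⟩
      exact ⟨Finset.mem_union_left _ hx, Finset.mem_union_left _ hy⟩
    · rcases Q.mem_of_le h with ⟨hx, hy⟩
      exact ⟨Finset.mem_union_right _ hx, Finset.mem_union_right _ hy⟩
    · exact ⟨Finset.mem_union_right _ (Q.mem_of_le h1).1, Finset.mem_union_left _ h2⟩
  le_refl := by
    intro x hx
    rcases Finset.mem_union.1 hx with h | h
    · exact Or.inl (P.le_refl x h)
    · exact Or.inr (Or.inl (Q.le_refl x h))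
  le_trans := by
    rintro x y z (h1 | h1 | ⟨h1, h1'⟩) (h2 | h2 | ⟨h2, h2'⟩)
    · exact Or.inl (P.le_trans h1 h2)
    · exact absurd (Q.mem_of_le h2).1 (Finset.disjoint_left.1 hd (P.mem_of_le h1).2)
    · exact absurd (Q.mem_of_le h2).1 (Finset.disjoint_left.1 hd (P.mem_of_le h1).2)
    · exact absurd (P.mem_of_le h2).1 (Finset.disjoint_right.1 hd (Q.mem_of_le h1).2)
    · exact Or.inr (Or.inl (Q.le_trans h1 h2))
    · exact Or.inr (Or.inr ⟨Q.le_trans h1 h2, h2'⟩)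
    · exact Or.inr (Or.inr ⟨h1, (P.mem_of_le h2).2⟩)
    · exact absurd (Q.mem_of_le h2).1 (Finset.disjoint_left.1 hd h1')
    · exact absurd (Q.mem_of_le h2).1 (Finset.disjoint_left.1 hd h1')
  le_antisymm := by
    rintro x y (h1 | h1 | ⟨h1, h1'⟩) (h2 | h2 | ⟨h2, h2'⟩)
    · exact P.le_antisymm h1 h2
    · exact absurd (Q.mem_of_le h2).1 (Finset.disjoint_left.1 hd (P.mem_of_le h1).2)
    · exact absurd (Q.mem_of_le h2).1 (Finset.disjoint_left.1 hd (P.mem_of_le h1).2)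
    · exact absurd (P.mem_of_le h2).1 (Finset.disjoint_right.1 hd (Q.mem_of_le h1).2)
    · exact Q.le_antisymm h1 h2
    · exact absurd (Q.mem_of_le h1).1 (Finset.disjoint_left.1 hd h2')
    · exact absurd (P.mem_of_le h2).2 (Finset.disjoint_right.1 hd (Q.mem_of_le h1).1)
    · exact absurd (Q.mem_of_le h2).1 (Finset.disjoint_left.1 hd h1')
    · exact absurd (Q.mem_of_le h1).1 (Finset.disjoint_left.1 hd h2')
  
/-- The grafting `P ↘_v Q` of `P` above the vertex `v` of `Q`: the poset on
`X₁ ⊔ X₂` restricting to `P` on `X₁` and to `Q` on `X₂`, with `q ≤ p` for `q ∈ X₂`,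
`p ∈ X₁` iff `q ≤_Q v`.  (Junk value when the carriers are not disjoint or `v ∉ Q`.) -/
noncomputable def graft (P Q : FinPoset α) (v : α) : FinPoset α :=
  if h : Disjoint P.carrier Q.carrier ∧ v ∈ Q.carrier then P.graftAux Q v h.1 h.2 else P

/-- The set of subsets `I` of the carrier with `I ◎ P`. -/
noncomputable def circSet (P : FinPoset α) : Finset (Finset α) :=
  P.carrier.powerset.filter (fun I => P.Circ I)

/-- Order isomorphisms from `A` to `B`, encoded as maps `α → α` that are the identity
outside of the carrier of `A`. -/
def Isos (A B : FinPoset α) : Set (α → α) :=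
  {f | Set.BijOn f ↑A.carrier ↑B.carrier ∧
    (∀ x ∈ A.carrier, ∀ y ∈ A.carrier, (A.le x y ↔ B.le (f x) (f y))) ∧
    ∀ x, x ∉ A.carrier → f x = x}

/-- `⟨A, B⟩`: the number of order isomorphisms from `A` to `B`. -/
noncomputable def pairing (A B : FinPoset α) : ℕ := Nat.card ↥(Isos A B)

/-- The NAP coproduct `δ(P) = (1/|min(P)|) Σ_{I ◎ P} I ⊗ (P \ I)`, with values in the
rational vector space spanned by pairs of finite posets. -/
noncomputable def delta (P : FinPoset α) : (FinPoset α × FinPoset α) →₀ ℚ :=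
  ((P.minSet.card : ℚ))⁻¹ • ∑ I ∈ P.circSet,
    Finsupp.single (P.restrict I, P.restrict (P.carrier \ I)) (1 : ℚ)

end FinPoset

namespace FinPoset

variable {α : Type*} [DecidableEq α]

lemma ext' {A B : FinPoset α} (h1 : A.carrier = B.carrier) (h2 : A.le = B.le) : A = B := by
  cases A; cases B
  dsimp at h1 h2
  subst h1; subst h2
  rfl

lemma mem_below {P : FinPoset α} {I : Finset α} {x : α} :
    x ∈ P.below I ↔ (x ∈ P.carrier ∧ x ∉ I) ∧ ∃ y ∈ I, P.le x y := by
  simp [below, Finset.mem_filter, Finset.mem_sdiff]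

lemma mem_minSet {P : FinPoset α} {x : α} :
    x ∈ P.minSet ↔ x ∈ P.carrier ∧ ∀ y, P.le y x → y = x := by
  simp [minSet, Finset.mem_filter]

lemma mem_circSet {P : FinPoset α} {I : Finset α} :
    I ∈ P.circSet ↔ I ⊆ P.carrier ∧ P.Circ I := by
  simp [circSet, Finset.mem_filter, Finset.mem_powerset]

lemma restrict_carrier (P : FinPoset α) (S : Finset α) :
    (P.restrict S).carrier = P.carrier ∩ S := rfl

lemma restrict_le {P : FinPoset α} {S : Finset α} {x y : α} :
    (P.restrict S).le x y ↔ P.le x y ∧ x ∈ S ∧ y ∈ S := Iff.rfl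

lemma restrict_restrict (P : FinPoset α) {S T : Finset α} (h : T ⊆ S) :
    (P.restrict S).restrict T = P.restrict T := by
  refine ext' ?_ ?_
  · ext x
    simp only [restrict_carrier, Finset.mem_inter]
    exact ⟨fun ⟨⟨h1, _⟩, h2⟩ => ⟨h1, h2⟩, fun ⟨h1, h2⟩ => ⟨⟨h1, h h2⟩, h2⟩⟩
  · funext x y
    apply propext
    constructor
    · rintro ⟨⟨h1, _, _⟩, h2, h3⟩; exact ⟨h1, h2, h3⟩
    · rintro ⟨h1, h2, h3⟩; exact ⟨⟨h1, h h2, h h3⟩, h2, h3⟩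

/-- If `I ◎ P` then `min(P \ I) = min(P)`. -/
lemma minSet_sdiff {P : FinPoset α} {I : Finset α} (hI : P.Circ I) :
    (P.restrict (P.carrier \ I)).minSet = P.minSet := by
  obtain ⟨w, hbI, hwmin, hcc⟩ := hI
  have hwm := mem_minSet.mp hwmin
  have hIsub : ∀ x ∈ I, x ∈ P.carrier ∧ P.lt w x := by
    intro x hx
    exact hcc.2.1 (by exact_mod_cast hx)
  ext x
  simp only [mem_minSet, restrict_carrier, Finset.mem_inter, Finset.mem_sdiff, restrict_le]
  constructor
  · rintro ⟨⟨hxc, _, hxI⟩, hmin⟩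
    refine ⟨hxc, fun y hy => ?_⟩
    have hyc := (P.mem_of_le hy).1
    by_cases hyI : y ∈ I
    · exfalso
      have hwy := (hIsub y hyI).2
      have hxw : x ≠ w := by
        rintro rfl
        exact hwy.2 (hwm.2 y hy).symm
      have hwx : P.lt w x := ⟨P.le_trans hwy.1 hy, fun h => hxw h.symm⟩
      exact hxI (by exact_mod_cast hcc.2.2.2 y (by exact_mod_cast hyI) x ⟨hxc, hwx⟩ (Or.inl hy))
    · exact hmin y ⟨hy, ⟨hyc, hyI⟩, hxc, hxI⟩
  · rintro ⟨hxc, hmin⟩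
    have hxI : x ∉ I := by
      intro hxI
      have := (hIsub x hxI).2
      exact this.2 (hmin w this.1)
    exact ⟨⟨hxc, hxc, hxI⟩, fun y hy => hmin y hy.1⟩


lemma circ_swap (P : FinPoset α) {I J : Finset α} (hI : I ∈ P.circSet)
    (hJ : J ∈ (P.restrict (P.carrier \ I)).circSet) :
    J ∈ P.circSet ∧ I ∈ (P.restrict (P.carrier \ J)).circSet := by
  classical
  set c := P.carrier with hc
  set Q := P.restrict (c \ I) with hQ
  obtain ⟨hIc, hCircI⟩ := mem_circSet.mp hI
  obtain ⟨w, hbI, hwmin, hccI⟩ := hCircI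
  obtain ⟨hJsub, hCircJ⟩ := mem_circSet.mp hJ
  obtain ⟨v, hbJ, hvmin, hccJ⟩ := hCircJ
  have hwm := mem_minSet.mp hwmin
  -- generic facts
  have hJc : ∀ x ∈ J, x ∈ c ∧ x ∉ I := by
    intro x hx
    have := hJsub hx
    rw [restrict_carrier, Finset.mem_inter, Finset.mem_sdiff] at this
    exact ⟨this.1, this.2.2⟩
  have hIw : ∀ x ∈ I, P.lt w x := by
    intro x hx
    exact (hccI.2.1 (Finset.mem_coe.mpr hx)).2
  have hIJ : ∀ x ∈ I, x ∉ J := fun x hx hxJ => (hJc x hxJ).2 hx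
  have hv : v ∈ Q.below J := by rw [hbJ]; exact Finset.mem_singleton_self v
  obtain ⟨⟨hvQc, hvJ⟩, y₀, hy₀J, hvy₀⟩ := mem_below.mp hv
  have hvcI : v ∈ c ∧ v ∉ I := by
    rw [restrict_carrier, Finset.mem_inter, Finset.mem_sdiff] at hvQc
    exact ⟨hvQc.1, hvQc.2.2⟩
  have hvP : v ∈ P.minSet := by rw [← minSet_sdiff ⟨w, hbI, hwmin, hccI⟩]; exact hvmin
  have hvm := mem_minSet.mp hvP
  have hJv : ∀ x ∈ J, P.lt v x := by
    intro x hx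
    have := (hccJ.2.1 (Finset.mem_coe.mpr hx)).2
    exact ⟨this.1.1, this.2⟩
  have hwv : w ∉ J := by
    intro hwJ
    exact (hJv w hwJ).2 (hwm.2 v (hJv w hwJ).1)
  have hwb : w ∈ P.below I := by rw [hbI]; exact Finset.mem_singleton_self w
  obtain ⟨⟨hwc, hwI⟩, y₁, hy₁I, hwy₁⟩ := mem_below.mp hwb
  -- `P.below J = {v}`
  have hPbJ : P.below J = {v} := by
    ext x
    rw [mem_below, Finset.mem_singleton]
    constructor
    · rintro ⟨⟨hxc, hxJ⟩, y, hyJ, hxy⟩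
      have hxI : x ∉ I := by
        intro hxI
        have hwx := hIw x hxI
        have hyc := (hJc y hyJ).1
        have hwy : P.lt w y :=
          ⟨P.le_trans hwx.1 hxy, by rintro rfl; exact hwx.2 (P.le_antisymm hwx.1 hxy)⟩
        have : y ∈ (↑I : Set α) :=
          hccI.2.2.2 x (Finset.mem_coe.mpr hxI) y ⟨hyc, hwy⟩ (Or.inl hxy)
        exact (hJc y hyJ).2 (Finset.mem_coe.mp this)
      have hyQ : Q.le x y :=
        ⟨hxy, Finset.mem_sdiff.mpr ⟨hxc, hxI⟩,
          Finset.mem_sdiff.mpr ⟨(hJc y hyJ).1, (hJc y hyJ).2⟩⟩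
      have hmem : x ∈ Q.below J := by
        refine mem_below.mpr ⟨⟨?_, hxJ⟩, y, hyJ, hyQ⟩
        rw [restrict_carrier, Finset.mem_inter, Finset.mem_sdiff]
        exact ⟨hxc, hxc, hxI⟩
      rw [hbJ] at hmem
      exact Finset.mem_singleton.mp hmem
    · rintro rfl
      exact ⟨⟨hvcI.1, hvJ⟩, y₀, hy₀J, hvy₀.1⟩
  -- `J ◎ P`
  have hCircJP : P.Circ J := by
    refine ⟨v, hPbJ, hvP, hccJ.1, ?_, ?_, ?_⟩
    · intro x hx
      exact ⟨(hJc x (Finset.mem_coe.mp hx)).1, hJv x (Finset.mem_coe.mp hx)⟩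
    · intro x hx y hy
      refine Relation.ReflTransGen.mono ?_ x y (hccJ.2.2.1 x hx y hy)
      rintro a b ⟨ha, hb, hab⟩
      exact ⟨ha, hb, hab.imp (·.1) (·.1)⟩
    · rintro x hx y ⟨hyc, hvy⟩ hcomp
      have hxJ := Finset.mem_coe.mp hx
      have hxcI := hJc x hxJ
      have hyI : y ∉ I := by
        intro hyI
        have hwy := hIw y hyI
        rcases hcomp with hxy | hyx
        · have hxb : x ∈ P.below I := mem_below.mpr ⟨⟨hxcI.1, hxcI.2⟩, y, hyI, hxy⟩
          rw [hbI, Finset.mem_singleton] at hxb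
          exact hwv (hxb ▸ hxJ)
        · have hwx : P.lt w x :=
            ⟨P.le_trans hwy.1 hyx, by rintro rfl; exact hwy.2 (P.le_antisymm hwy.1 hyx)⟩
          have : x ∈ (↑I : Set α) :=
            hccI.2.2.2 y (Finset.mem_coe.mpr hyI) x ⟨hxcI.1, hwx⟩ (Or.inl hyx)
          exact hxcI.2 (Finset.mem_coe.mp this)
      have hyQc : y ∈ Q.carrier := by
        rw [restrict_carrier, Finset.mem_inter, Finset.mem_sdiff]
        exact ⟨hyc, hyc, hyI⟩
      have hxsd : x ∈ c \ I := Finset.mem_sdiff.mpr ⟨hxcI.1, hxcI.2⟩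
      have hysd : y ∈ c \ I := Finset.mem_sdiff.mpr ⟨hyc, hyI⟩
      have hvsd : v ∈ c \ I := Finset.mem_sdiff.mpr ⟨hvcI.1, hvcI.2⟩
      refine hccJ.2.2.2 x hx y ⟨hyQc, ⟨hvy.1, hvsd, hysd⟩, hvy.2⟩ ?_
      exact hcomp.imp (fun h => ⟨h, hxsd, hysd⟩) (fun h => ⟨h, hysd, hxsd⟩)
  -- `I ◎ (P \ J)`
  set Q' := P.restrict (c \ J) with hQ'
  have hIsdJ : ∀ x ∈ I, x ∈ c \ J := fun x hx =>
    Finset.mem_sdiff.mpr ⟨hIc hx, hIJ x hx⟩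
  have hwsd : w ∈ c \ J := Finset.mem_sdiff.mpr ⟨hwc, hwv⟩
  have hICirc' : Q'.Circ I := by
    refine ⟨w, ?_, by rw [minSet_sdiff hCircJP]; exact hwmin, hccI.1, ?_, ?_, ?_⟩
    · ext x
      rw [mem_below, Finset.mem_singleton]
      constructor
      · rintro ⟨⟨hxQ, hxI⟩, y, hyI, hxy⟩
        have hxc : x ∈ c := by
          rw [restrict_carrier, Finset.mem_inter] at hxQ
          exact hxQ.1
        have hxb : x ∈ P.below I := mem_below.mpr ⟨⟨hxc, hxI⟩, y, hyI, hxy.1⟩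
        rw [hbI, Finset.mem_singleton] at hxb
        exact hxb
      · rintro rfl
        refine ⟨⟨?_, hwI⟩, y₁, hy₁I, hwy₁, hwsd, hIsdJ y₁ hy₁I⟩
        rw [restrict_carrier, Finset.mem_inter]
        exact ⟨hwc, hwsd⟩
    · intro x hx
      have hxI := Finset.mem_coe.mp hx
      have hwx := hIw x hxI
      constructor
      · rw [restrict_carrier, Finset.mem_inter]
        exact ⟨hIc hxI, hIsdJ x hxI⟩
      · exact ⟨⟨hwx.1, hwsd, hIsdJ x hxI⟩, hwx.2⟩
    · intro x hx y hy
      refine Relation.ReflTransGen.mono ?_ x y (hccI.2.2.1 x hx y hy)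
      rintro a b ⟨ha, hb, hab⟩
      refine ⟨ha, hb, hab.imp
        (fun h => ⟨h, hIsdJ a (Finset.mem_coe.mp ha), hIsdJ b (Finset.mem_coe.mp hb)⟩)
        (fun h => ⟨h, hIsdJ b (Finset.mem_coe.mp hb), hIsdJ a (Finset.mem_coe.mp ha)⟩)⟩
    · rintro x hx y ⟨hyQ, hlty⟩ hcomp
      have hyc : y ∈ c := by
        rw [restrict_carrier, Finset.mem_inter] at hyQ
        exact hyQ.1
      refine hccI.2.2.2 x hx y ⟨hyc, hlty.1.1, hlty.2⟩ ?_
      exact hcomp.imp (fun h => h.1) (fun h => h.1)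
  constructor
  · exact mem_circSet.mpr ⟨fun x hx => (hJc x hx).1, hCircJP⟩
  · refine mem_circSet.mpr ⟨?_, hICirc'⟩
    intro x hx
    rw [restrict_carrier, Finset.mem_inter]
    exact ⟨hIc hx, hIsdJ x hx⟩

end FinPoset

/-- The coproduct `δ` satisfies the left NAP identity
`(id ⊗ δ) ∘ δ = τ¹² ∘ (id ⊗ δ) ∘ δ` on every finite connected poset: the element
`(1/|min(P)|) Σ_{I ◎ P} (1/|min(P\I)|) Σ_{J ◎ (P\I)} I ⊗ J ⊗ ((P\I)\J)` is invariant
under exchanging the first two tensor factors. -/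
theorem coproduct_nap {α : Type*} [DecidableEq α] (P : FinPoset α) (hP : P.Connected) :
    (((P.minSet.card : ℚ))⁻¹ • ∑ I ∈ P.circSet,
      (((P.restrict (P.carrier \ I)).minSet.card : ℚ))⁻¹ •
        ∑ J ∈ (P.restrict (P.carrier \ I)).circSet,
          Finsupp.single
            (P.restrict I, (P.restrict (P.carrier \ I)).restrict J,
              (P.restrict (P.carrier \ I)).restrict ((P.carrier \ I) \ J))
            (1 : ℚ) :
        (FinPoset α × FinPoset α × FinPoset α) →₀ ℚ)
    = ((P.minSet.card : ℚ))⁻¹ • ∑ I ∈ P.circSet,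
      (((P.restrict (P.carrier \ I)).minSet.card : ℚ))⁻¹ •
        ∑ J ∈ (P.restrict (P.carrier \ I)).circSet,
          Finsupp.single
            ((P.restrict (P.carrier \ I)).restrict J, P.restrict I,
              (P.restrict (P.carrier \ I)).restrict ((P.carrier \ I) \ J))
            (1 : ℚ) := by
  classical
  have key : ∀ (F : Finset α → Finset α → FinPoset α × FinPoset α × FinPoset α),
      (∑ I ∈ P.circSet,
        (((P.restrict (P.carrier \ I)).minSet.card : ℚ))⁻¹ •
          ∑ J ∈ (P.restrict (P.carrier \ I)).circSet, Finsupp.single (F I J) (1 : ℚ))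
      = ((P.minSet.card : ℚ))⁻¹ •
          ∑ p ∈ P.circSet.sigma (fun I => (P.restrict (P.carrier \ I)).circSet),
            Finsupp.single (F p.1 p.2) (1 : ℚ) := by
    intro F
    rw [← Finset.sum_sigma' P.circSet _ (fun I J => Finsupp.single (F I J) (1 : ℚ)),
      Finset.smul_sum]
    exact Finset.sum_congr rfl fun I hI => by
      rw [FinPoset.minSet_sdiff (FinPoset.mem_circSet.mp hI).2]
  have hmain :
      (∑ p ∈ P.circSet.sigma (fun I => (P.restrict (P.carrier \ I)).circSet),
        Finsupp.single
          (P.restrict p.1, (P.restrict (P.carrier \ p.1)).restrict p.2,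
            (P.restrict (P.carrier \ p.1)).restrict ((P.carrier \ p.1) \ p.2)) (1 : ℚ))
      = ∑ p ∈ P.circSet.sigma (fun I => (P.restrict (P.carrier \ I)).circSet),
          Finsupp.single
            ((P.restrict (P.carrier \ p.1)).restrict p.2, P.restrict p.1,
              (P.restrict (P.carrier \ p.1)).restrict ((P.carrier \ p.1) \ p.2)) (1 : ℚ) := by
    apply Finset.sum_nbij'
      (i := fun p : (_ : Finset α) × Finset α => (⟨p.2, p.1⟩ : (_ : Finset α) × Finset α))
      (j := fun p : (_ : Finset α) × Finset α => (⟨p.2, p.1⟩ : (_ : Finset α) × Finset α))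
      (left_neg := fun p _ => rfl) (right_neg := fun p _ => rfl)
    · rintro ⟨I, J⟩ hp
      rw [Finset.mem_sigma] at hp ⊢
      exact FinPoset.circ_swap P hp.1 hp.2
    · rintro ⟨I, J⟩ hp
      rw [Finset.mem_sigma] at hp ⊢
      exact FinPoset.circ_swap P hp.1 hp.2
    · rintro ⟨I, J⟩ hp
      rw [Finset.mem_sigma] at hp
      have hIc := (FinPoset.mem_circSet.mp hp.1).1
      have hJQ := (FinPoset.mem_circSet.mp hp.2).1
      have hJsd : J ⊆ P.carrier \ I := fun x hx => (Finset.mem_inter.mp (hJQ hx)).2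
      have hIsd : I ⊆ P.carrier \ J := fun x hx =>
        Finset.mem_sdiff.mpr ⟨hIc hx, fun hxJ => (Finset.mem_sdiff.mp (hJsd hxJ)).2 hx⟩
      refine congrArg (fun t => Finsupp.single t (1 : ℚ)) ?_
      simp only [Prod.mk.injEq]
      refine ⟨(FinPoset.restrict_restrict P hIsd).symm, FinPoset.restrict_restrict P hJsd, ?_⟩
      rw [FinPoset.restrict_restrict P (Finset.sdiff_subset),
        FinPoset.restrict_restrict P (Finset.sdiff_subset), sdiff_sdiff_comm]
  simp only [key, hmain]
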